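/- Let d_1, …, d_{n_d} be finitely many target points in ℝⁿ with intensities T_1, …, T_{n_d} ∈ (0,1], and let p_1, …, p_m ∈ ℝⁿ be limit vertex positions such that every target point d_h either lies in the topological interior of the convex hull of {p_1, …, p_m} or lies outside that convex hull, and at least one d_h lies in the interior. Define D̄ = {h : d_h ∈ convex hull of {p_1,…,p_m}} and the desired centroid p̄ = (Σ_{h∈D̄} T_h d_h) / |D̄|. Suppose r_1(t), …, r_m(t) ∈ ℝⁿ satisfy r_j(t) → p_j as t → ∞ for every j. Let D(t) = {h : d_h ∈ convex hull of {r_1(t),…,r_m(t)}} and, whenever D(t) is nonempty, let r̄(t) = (Σ_{h∈D(t)} T_h d_h) / |D(t)|. Then for all sufficiently large t the set D(t) equals D̄, and consequently r̄(t) → p̄ as t → ∞. -/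

import Mathlib

open Filter Topology Classical RealInnerProductSpace

section Aux

variable {n : ℕ}

local notation "E" n => EuclideanSpace ℝ (Fin n)

/-- If `x` has an `ε`-ball inside the convex hull of the `p j` and each `q j` is within `ε`
of `p j`, then `x` is in the convex hull of the `q j`. -/
lemma aux_mem_hull_of_close {n m : ℕ} {p q : Fin m → EuclideanSpace ℝ (Fin n)}
    {x : EuclideanSpace ℝ (Fin n)} {ε : ℝ} (hε : 0 < ε)
    (hball : Metric.ball x ε ⊆ convexHull ℝ (Set.range p))
    (hq : ∀ j, dist (q j) (p j) < ε) :
    x ∈ convexHull ℝ (Set.range q) := by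
  by_contra hx
  have hcl : IsClosed (convexHull ℝ (Set.range q)) :=
    (Set.finite_range q).isClosed_convexHull ℝ
  obtain ⟨f, u, hfs, hfx⟩ :=
    geometric_hahn_banach_closed_point (convex_convexHull ℝ _) hcl hx
  set y : EuclideanSpace ℝ (Fin n) := (InnerProductSpace.toDual ℝ _).symm f with hy
  have hfz : ∀ z, f z = (inner ℝ y z : ℝ) := fun z =>
    (InnerProductSpace.toDual_symm_apply).symm
  have hfy : ‖f‖ = ‖y‖ := by
    rw [hy]; exact ((InnerProductSpace.toDual ℝ _).symm.norm_map f).symm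
  -- on the hull of p, f is bounded by u + ‖y‖ * ε
  have hb : ∀ z ∈ convexHull ℝ (Set.range p), f z ≤ u + ‖y‖ * ε := by
    have hconv : Convex ℝ {w : EuclideanSpace ℝ (Fin n) | f w ≤ u + ‖y‖ * ε} :=
      convex_halfSpace_le (IsLinearMap.mk f.map_add f.map_smul) _
    refine convexHull_min ?_ hconv
    rintro _ ⟨j, rfl⟩
    have h1 : f (q j) < u := hfs _ (subset_convexHull ℝ _ (Set.mem_range_self j))
    have h2 : f (p j - q j) ≤ ‖f‖ * ‖p j - q j‖ :=
      le_trans (le_abs_self _) (f.le_opNorm _)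
    have h3 : ‖p j - q j‖ < ε := by
      rw [← dist_eq_norm, dist_comm]; exact hq j
    have h4 : ‖f‖ * ‖p j - q j‖ ≤ ‖y‖ * ε := by
      rw [hfy]; exact mul_le_mul_of_nonneg_left h3.le (norm_nonneg _)
    have : f (p j) = f (q j) + f (p j - q j) := by
      rw [← f.map_add]; congr 1; abel
    show f (p j) ≤ u + ‖y‖ * ε
    rw [this]
    linarith
  -- key inequality
  have key : ∀ s : ℝ, 0 ≤ s → s < ε → f x + s * ‖y‖ ≤ u + ‖y‖ * ε := by
    intro s hs0 hsε
    set z : EuclideanSpace ℝ (Fin n) := x + (s * ‖y‖⁻¹) • y with hz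
    have hzball : z ∈ Metric.ball x ε := by
      rw [Metric.mem_ball, hz, dist_eq_norm]
      have : x + (s * ‖y‖⁻¹) • y - x = (s * ‖y‖⁻¹) • y := by abel
      rw [this, norm_smul]
      have h1 : ‖(s * ‖y‖⁻¹ : ℝ)‖ = s * ‖y‖⁻¹ := by
        rw [Real.norm_eq_abs, abs_of_nonneg (mul_nonneg hs0 (by positivity))]
      rw [h1]
      have h2 : s * ‖y‖⁻¹ * ‖y‖ ≤ s := by
        rcases eq_or_ne y 0 with h | h
        · simp [h, hs0]
        · rw [mul_assoc, inv_mul_cancel₀ (norm_ne_zero_iff.2 h), mul_one]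
      exact lt_of_le_of_lt h2 hsε
    have hfz2 : f z = f x + s * ‖y‖ := by
      rw [hz, f.map_add, f.map_smul]
      congr 1
      rcases eq_or_ne y 0 with h | h
      · simp [h, hfz]
      · have hyn : ‖y‖ ≠ 0 := norm_ne_zero_iff.2 h
        rw [smul_eq_mul, hfz y, real_inner_self_eq_norm_sq]
        field_simp
    have := hb z (hball hzball)
    linarith [hfz2 ▸ this]
  -- derive a contradiction
  have h1 := key (ε / 2) (by positivity) (by linarith)
  have hy0 : 0 < ‖y‖ := by
    rcases lt_or_eq_of_le (norm_nonneg y) with h | h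
    · exact h
    · exfalso; rw [← h] at h1; simp at h1; linarith
  have hfrac : 0 < (f x - u) / (2 * ‖y‖) := by
    apply div_pos (by linarith) (by positivity)
  have hfrac2 : (f x - u) / (2 * ‖y‖) ≤ ε / 4 := by
    rw [div_le_iff₀ (by positivity)]
    nlinarith
  set s₀ : ℝ := ε - (f x - u) / (2 * ‖y‖) with hs₀
  have h2 := key s₀ (by rw [hs₀]; linarith) (by rw [hs₀]; linarith)
  have hid : s₀ * ‖y‖ = ε * ‖y‖ - (f x - u) / 2 := by
    rw [hs₀]; field_simp
  rw [hid] at h2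
  linarith

/-- If `x` is at distance at least `δ > 0` from the convex hull of the `p j` and each `q j`
is within `δ` of `p j`, then `x` is not in the convex hull of the `q j`. -/
lemma aux_not_mem_hull_of_close {n m : ℕ} {p q : Fin m → EuclideanSpace ℝ (Fin n)}
    {x : EuclideanSpace ℝ (Fin n)} {δ : ℝ} (hδ0 : 0 < δ)
    (hδ : ∀ y ∈ convexHull ℝ (Set.range p), δ ≤ dist x y)
    (hq : ∀ j, dist (q j) (p j) < δ) :
    x ∉ convexHull ℝ (Set.range q) := by
  intro hx
  rw [convexHull_range_eq_exists_affineCombination] at hx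
  obtain ⟨s, w, hw0, hw1, hxw⟩ := hx
  have hy : s.affineCombination ℝ p w ∈ convexHull ℝ (Set.range p) :=
    affineCombination_mem_convexHull hw0 hw1
  have hxs : x = ∑ i ∈ s, w i • q i := by
    rw [← hxw, s.affineCombination_eq_linear_combination q w hw1]
  have hys : s.affineCombination ℝ p w = ∑ i ∈ s, w i • p i :=
    s.affineCombination_eq_linear_combination p w hw1
  obtain ⟨i₀, hi₀s, hi₀⟩ : ∃ i ∈ s, w i ≠ 0 := by
    by_contra hc
    push_neg at hc
    rw [Finset.sum_eq_zero (fun i hi => hc i hi)] at hw1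
    norm_num at hw1
  have hdist : dist x (s.affineCombination ℝ p w) < δ := by
    rw [dist_eq_norm, hxs, hys, ← Finset.sum_sub_distrib]
    have heq : ∀ i ∈ s, w i • q i - w i • p i = w i • (q i - p i) := by
      intro i _; rw [smul_sub]
    rw [Finset.sum_congr rfl heq]
    calc ‖∑ i ∈ s, w i • (q i - p i)‖ ≤ ∑ i ∈ s, ‖w i • (q i - p i)‖ :=
          norm_sum_le _ _
      _ < ∑ i ∈ s, w i * δ := by
          apply Finset.sum_lt_sum
          · intro i hi
            rw [norm_smul, Real.norm_eq_abs, abs_of_nonneg (hw0 i hi)]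
            apply mul_le_mul_of_nonneg_left _ (hw0 i hi)
            rw [← dist_eq_norm]
            exact (hq i).le
          · refine ⟨i₀, hi₀s, ?_⟩
            rw [norm_smul, Real.norm_eq_abs, abs_of_nonneg (hw0 i₀ hi₀s)]
            apply mul_lt_mul_of_pos_left _ (lt_of_le_of_ne (hw0 i₀ hi₀s) (Ne.symm hi₀))
            rw [← dist_eq_norm]
            exact hq i₀
      _ = δ := by rw [← Finset.sum_mul, hw1, one_mul]
  exact absurd (hδ _ hy) (not_le.2 hdist)

end Aux

/-- **Convergence of the observed target centroid.**
Target points `d h` with intensities `T h ∈ (0,1]` are each either interior to the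
convex hull of the limit vertex positions `p j` or outside that hull, with at least
one interior point. If the moving vertices `r t j` converge to `p j`, then the set
`D t` of targets enclosed by the moving hull eventually equals the desired set `D̄`
of targets enclosed by the limit hull, and consequently the intensity-weighted
centroid of the enclosed targets converges to the desired centroid. -/
theorem enclosed_centroid_tendsto
    (n nd m : ℕ)
    (d : Fin nd → EuclideanSpace ℝ (Fin n)) (T : Fin nd → ℝ)
    (hT : ∀ h, T h ∈ Set.Ioc (0 : ℝ) 1)
    (p : Fin m → EuclideanSpace ℝ (Fin n))
    (hsep : ∀ h, d h ∈ interior (convexHull ℝ (Set.range p)) ∨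
      d h ∉ convexHull ℝ (Set.range p))
    (hex : ∃ h, d h ∈ interior (convexHull ℝ (Set.range p)))
    (r : ℝ → Fin m → EuclideanSpace ℝ (Fin n))
    (hr : ∀ j, Tendsto (fun t => r t j) atTop (𝓝 (p j))) :
    (∀ᶠ t in atTop,
        (Finset.univ.filter fun h => d h ∈ convexHull ℝ (Set.range (r t))) =
          (Finset.univ.filter fun h => d h ∈ convexHull ℝ (Set.range p))) ∧
      Tendsto
        (fun t =>
          (((Finset.univ.filter fun h =>
                d h ∈ convexHull ℝ (Set.range (r t))).card : ℝ))⁻¹ •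
            ∑ h ∈ Finset.univ.filter fun h => d h ∈ convexHull ℝ (Set.range (r t)),
              T h • d h)
        atTop
        (𝓝 ((((Finset.univ.filter fun h =>
                d h ∈ convexHull ℝ (Set.range p)).card : ℝ))⁻¹ •
            ∑ h ∈ Finset.univ.filter fun h => d h ∈ convexHull ℝ (Set.range p),
              T h • d h)) := by
  obtain ⟨h₀, hh₀⟩ := hex
  have hne : (convexHull ℝ (Set.range p)).Nonempty := ⟨d h₀, interior_subset hh₀⟩
  have hcl : IsClosed (convexHull ℝ (Set.range p)) :=
    (Set.finite_range p).isClosed_convexHull ℝ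
  have hclose : ∀ ε : ℝ, 0 < ε → ∀ᶠ t in atTop, ∀ j, dist (r t j) (p j) < ε := by
    intro ε hε
    rw [eventually_all]
    intro j
    have := (hr j) (Metric.ball_mem_nhds (p j) hε)
    filter_upwards [this] with t ht
    exact Metric.mem_ball.1 ht
  have hall : ∀ h : Fin nd, ∀ᶠ t in atTop,
      (d h ∈ convexHull ℝ (Set.range (r t)) ↔ d h ∈ convexHull ℝ (Set.range p)) := by
    intro h
    rcases hsep h with hin | hout
    · obtain ⟨ε, hε, hball⟩ := Metric.isOpen_iff.mp isOpen_interior _ hin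
      have hball' : Metric.ball (d h) ε ⊆ convexHull ℝ (Set.range p) :=
        hball.trans interior_subset
      filter_upwards [hclose ε hε] with t ht
      exact iff_of_true (aux_mem_hull_of_close hε hball' ht) (interior_subset hin)
    · have hd : 0 < Metric.infDist (d h) (convexHull ℝ (Set.range p)) :=
        (hcl.notMem_iff_infDist_pos hne).1 hout
      filter_upwards [hclose _ hd] with t ht
      refine iff_of_false (aux_not_mem_hull_of_close hd ?_ ht) hout
      intro y hy
      exact Metric.infDist_le_dist_of_mem hy
  have key : ∀ᶠ t in atTop,
      (Finset.univ.filter fun h => d h ∈ convexHull ℝ (Set.range (r t))) =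
        (Finset.univ.filter fun h => d h ∈ convexHull ℝ (Set.range p)) := by
    filter_upwards [eventually_all.2 hall] with t ht
    ext h
    simp only [Finset.mem_filter, Finset.mem_univ, true_and]
    exact ht h
  refine ⟨key, ?_⟩
  refine Tendsto.congr' ?_ tendsto_const_nhds
  filter_upwards [key] with t ht
  rw [ht]
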